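/- Let A be a real n×d matrix of full column rank, p ≥ 2, g ∈ ℝ^d, and let R = diag(r) with r ∈ ℝ^n nonnegative. Suppose there exists x* ∈ ℝ^d with g^⊤x* = −1, (x*)^⊤A^⊤RAx* ≤ 1, and ‖Ax*‖_p ≤ 1. Let w ∈ ℝ^n be strictly positive with w_i ≥ σ(W^{1/2−1/p}A)_i for all i and Σ_i w_i ≥ d, and let s ∈ ℝ^n satisfy s_i ≥ w_i^{1/p} for all i. Then the infimum over {x ∈ ℝ^d : g^⊤x = −1} of x^⊤A^⊤(d^{1−2/p}R + S^{p−2})Ax is at most 2·(Σ_i s_i^p)^{1−2/p}, where S = diag(s). -/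

import Mathlib

open Matrix

/-- Leverage score of row `i` of matrix `M`: `σ(M)_i = m_i^⊤ (M^⊤ M)⁻¹ m_i`. -/
noncomputable def levScore {n d : ℕ} (M : Matrix (Fin n) (Fin d) ℝ) (i : Fin n) : ℝ :=
  M i ⬝ᵥ ((Mᵀ * M)⁻¹ *ᵥ M i)

lemma quadform {n d : ℕ} (A : Matrix (Fin n) (Fin d) ℝ) (D : Fin n → ℝ) (x : Fin d → ℝ) :
    x ⬝ᵥ ((Aᵀ * Matrix.diagonal D * A) *ᵥ x) = ∑ i, D i * ((A *ᵥ x) i)^2 := by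
  rw [← Matrix.mulVec_mulVec, ← Matrix.mulVec_mulVec, Matrix.dotProduct_mulVec,
    Matrix.vecMul_transpose]
  simp only [dotProduct, Matrix.mulVec_diagonal]
  exact Finset.sum_congr rfl fun i _ => by ring

theorem stmt4 {n d : ℕ} (A : Matrix (Fin n) (Fin d) ℝ) (hA : A.rank = d)
    (p : ℝ) (hp : 2 ≤ p) (g : Fin d → ℝ) (r : Fin n → ℝ) (hr : ∀ i, 0 ≤ r i)
    (hex : ∃ xs : Fin d → ℝ, g ⬝ᵥ xs = -1 ∧
      xs ⬝ᵥ ((Aᵀ * Matrix.diagonal r * A) *ᵥ xs) ≤ 1 ∧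
      (∑ i, |(A *ᵥ xs) i| ^ p) ^ (1/p) ≤ 1)
    (w : Fin n → ℝ) (hw : ∀ i, 0 < w i)
    (hσ : ∀ i, levScore (Matrix.diagonal (fun j => w j ^ ((1:ℝ)/2 - 1/p)) * A) i ≤ w i)
    (hw1 : (d : ℝ) ≤ ∑ i, w i)
    (s : Fin n → ℝ) (hs : ∀ i, w i ^ (1/p) ≤ s i) :
    sInf {E : ℝ | ∃ x : Fin d → ℝ, g ⬝ᵥ x = -1 ∧
        E = x ⬝ᵥ ((Aᵀ * ((d : ℝ) ^ (1 - 2/p) • Matrix.diagonal r +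
          Matrix.diagonal (fun i => s i ^ (p - 2))) * A) *ᵥ x)} ≤
      2 * (∑ i, s i ^ p) ^ (1 - 2/p) := by
  have hp0 : (0:ℝ) < p := by linarith
  set c : ℝ := (d : ℝ) ^ (1 - 2/p) with hc
  have hcombo : ((d : ℝ) ^ (1 - 2/p) • Matrix.diagonal r +
      Matrix.diagonal (fun i => s i ^ (p - 2))) =
      Matrix.diagonal (fun i => c * r i + s i ^ (p - 2)) := by
    rw [← Matrix.diagonal_smul, ← Matrix.diagonal_add]
    rfl
  have hs0 : ∀ i, 0 ≤ s i := fun i =>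
    le_trans (Real.rpow_nonneg (hw i).le _) (hs i)
  have hsp2 : ∀ i, (0:ℝ) ≤ s i ^ (p - 2) := fun i => Real.rpow_nonneg (hs0 i) _
  have hc0 : 0 ≤ c := Real.rpow_nonneg (Nat.cast_nonneg d) _
  -- lower bound of the set
  have hbdd : BddBelow {E : ℝ | ∃ x : Fin d → ℝ, g ⬝ᵥ x = -1 ∧
      E = x ⬝ᵥ ((Aᵀ * ((d : ℝ) ^ (1 - 2/p) • Matrix.diagonal r +
        Matrix.diagonal (fun i => s i ^ (p - 2))) * A) *ᵥ x)} := by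
    refine ⟨0, fun E hE => ?_⟩
    obtain ⟨x, -, rfl⟩ := hE
    rw [hcombo, quadform]
    refine Finset.sum_nonneg fun i _ => mul_nonneg ?_ (sq_nonneg _)
    have := hr i
    have := hsp2 i
    positivity
  obtain ⟨xs, hgxs, hRxs, hLp⟩ := hex
  set y : Fin n → ℝ := A *ᵥ xs with hy
  have hmem : xs ⬝ᵥ ((Aᵀ * ((d : ℝ) ^ (1 - 2/p) • Matrix.diagonal r +
      Matrix.diagonal (fun i => s i ^ (p - 2))) * A) *ᵥ xs) ∈
      {E : ℝ | ∃ x : Fin d → ℝ, g ⬝ᵥ x = -1 ∧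
      E = x ⬝ᵥ ((Aᵀ * ((d : ℝ) ^ (1 - 2/p) • Matrix.diagonal r +
        Matrix.diagonal (fun i => s i ^ (p - 2))) * A) *ᵥ x)} := ⟨xs, hgxs, rfl⟩
  refine le_trans (csInf_le hbdd hmem) ?_
  rw [hcombo, quadform]
  -- basic facts
  have hyP : ∑ i, |y i| ^ p ≤ 1 := by
    have hS : (0:ℝ) ≤ ∑ i, |y i| ^ p :=
      Finset.sum_nonneg fun i _ => Real.rpow_nonneg (abs_nonneg _) _
    have := Real.rpow_le_rpow (Real.rpow_nonneg hS _) hLp hp0.le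
    rwa [← Real.rpow_mul hS, one_div, inv_mul_cancel₀ hp0.ne',
      Real.rpow_one, Real.one_rpow] at this
  have hsp : (0:ℝ) ≤ ∑ i, s i ^ p :=
    Finset.sum_nonneg fun i _ => Real.rpow_nonneg (hs0 i) _
  have hRy : ∑ i, r i * y i ^ 2 ≤ 1 := by rw [quadform] at hRxs; exact hRxs
  -- d ≤ ∑ s^p
  have hds : (d:ℝ) ≤ ∑ i, s i ^ p := by
    refine le_trans hw1 (Finset.sum_le_sum fun i _ => ?_)
    calc w i = (w i ^ (1/p)) ^ p := by
          rw [← Real.rpow_mul (hw i).le, one_div, inv_mul_cancel₀ hp0.ne', Real.rpow_one]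
      _ ≤ s i ^ p := Real.rpow_le_rpow (Real.rpow_nonneg (hw i).le _) (hs i) hp0.le
  have hcle : c ≤ (∑ i, s i ^ p) ^ (1 - 2/p) := by
    apply Real.rpow_le_rpow (Nat.cast_nonneg d) hds
    have : 2/p ≤ 1 := by
      rw [div_le_one hp0]; linarith
    linarith
  -- split the sum
  have hsplit : ∑ i, (c * r i + s i ^ (p - 2)) * y i ^ 2
      = c * (∑ i, r i * y i ^ 2) + ∑ i, s i ^ (p - 2) * y i ^ 2 := by
    rw [Finset.mul_sum, ← Finset.sum_add_distrib]
    exact Finset.sum_congr rfl fun i _ => by ring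
  rw [hsplit]
  -- Hölder bound on second term
  have hH : ∑ i, s i ^ (p - 2) * y i ^ 2 ≤ (∑ i, s i ^ p) ^ (1 - 2/p) := by
    rcases eq_or_lt_of_le hp with hp2 | hp2
    · -- p = 2
      subst hp2
      have h1 : ∀ i : Fin n, |y i| ^ (2:ℝ) = y i ^ 2 := fun i => by
        rw [show ((2:ℝ) = ((2:ℕ):ℝ)) by norm_num, Real.rpow_natCast, sq_abs]
      simp only [sub_self, Real.rpow_zero, one_mul]
      rw [show (1 - 2/(2:ℝ)) = 0 by norm_num, Real.rpow_zero]
      refine le_trans (le_of_eq ?_) hyP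
      exact Finset.sum_congr rfl fun i _ => (h1 i).symm
    · -- p > 2
      have hq1 : (1:ℝ) < p / (p - 2) := by
        rw [lt_div_iff₀ (by linarith)]; linarith
      have hconj : Real.HolderConjugate (p / (p - 2)) (p / 2) := by
        rw [Real.holderConjugate_iff]; constructor
        · exact hq1
        · field_simp; ring
      calc ∑ i, s i ^ (p - 2) * y i ^ 2
          ≤ (∑ i, (s i ^ (p - 2)) ^ (p / (p - 2))) ^ (1 / (p / (p - 2))) *
            (∑ i, (y i ^ 2) ^ (p / 2)) ^ (1 / (p / 2)) := by
            exact Real.inner_le_Lp_mul_Lq_of_nonneg _ hconj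
              (fun i _ => hsp2 i) (fun i _ => sq_nonneg _)
        _ = (∑ i, s i ^ p) ^ (1 - 2/p) * (∑ i, |y i| ^ p) ^ (2 / p) := by
            have hne : p - 2 ≠ 0 := by linarith
            have e1 : ∀ i : Fin n, (s i ^ (p-2)) ^ (p/(p-2)) = s i ^ p := fun i => by
              rw [← Real.rpow_mul (hs0 i)]
              congr 1
              field_simp
            have e2 : (1:ℝ)/(p/(p-2)) = 1 - 2/p := by
              rw [one_div_div]
              field_simp
            have e3 : ∀ i : Fin n, (y i ^ 2) ^ (p/2) = |y i| ^ p := fun i => by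
              rw [← sq_abs, ← Real.rpow_natCast |y i| 2, ← Real.rpow_mul (abs_nonneg _)]
              congr 1
              push_cast
              field_simp
            have e4 : (1:ℝ)/(p/2) = 2/p := one_div_div _ _
            simp only [e1, e2, e3, e4]
        _ ≤ (∑ i, s i ^ p) ^ (1 - 2/p) * 1 := by
            refine mul_le_mul_of_nonneg_left ?_ (Real.rpow_nonneg hsp _)
            exact Real.rpow_le_one (Finset.sum_nonneg fun i _ =>
              Real.rpow_nonneg (abs_nonneg _) _) hyP (by positivity)
        _ = (∑ i, s i ^ p) ^ (1 - 2/p) := mul_one _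
  have hfirst : c * (∑ i, r i * y i ^ 2) ≤ (∑ i, s i ^ p) ^ (1 - 2/p) := by
    calc c * (∑ i, r i * y i ^ 2) ≤ c * 1 := by
          refine mul_le_mul_of_nonneg_left hRy hc0
      _ = c := mul_one _
      _ ≤ _ := hcle
  linarith
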